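/- Let φ be an automorphism of a finite group G with gcd(|φ|, |G|) = 1, and let N be a normal φ-invariant subgroup of G. Then every fixed point of the induced automorphism of G/N is the image of a fixed point of φ in G; that is, C_{G/N}(φ) = C_G(φ)·N / N. -/

import Mathlib

open Subgroup

theorem aux_coset_fixed :
    ∀ (n : ℕ) (G : Type u) [Group G] [Finite G] (φ : MulAut G),
      orderOf φ = n → Nat.Coprime (orderOf φ) (Nat.card G) →
      ∀ (N : Subgroup G), (∀ a ∈ N, φ a ∈ N) →
      ∀ g : G, g⁻¹ * φ g ∈ N → ∃ h : G, φ h = h ∧ g⁻¹ * h ∈ N := by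
  intro n
  induction n using Nat.strong_induction_on with
  | _ n IH =>
    intro G _ _ φ hord hcop N hN g hg
    rcases eq_or_ne (orderOf φ) 1 with h1 | h1
    · refine ⟨g, ?_, by simpa using N.one_mem⟩
      rw [orderOf_eq_one_iff.mp h1]; rfl
    have hm0 : orderOf φ ≠ 0 := by
      have : Finite (MulAut G) := Finite.of_injective (fun f => (f : G → G))
        fun f g h => by ext x; exact congrFun h x
      exact (orderOf_pos φ).ne'
    set m := orderOf φ with hm
    have hp : (m.minFac).Prime := Nat.minFac_prime h1
    set p := m.minFac with hpdef
    have hpm : p ∣ m := Nat.minFac_dvd m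
    set ψ : MulAut G := φ ^ (m / p) with hψ
    have hψord : orderOf ψ = p := by
      exact orderOf_pow_orderOf_div hm0 hpm
    -- N is invariant under all integer powers of φ
    have hNinv : ∀ a ∈ N, φ⁻¹ a ∈ N := by
      intro a ha
      have hinj : Function.Injective (fun b : N => (⟨φ b, hN b b.2⟩ : N)) := by
        intro b c h
        have := congrArg Subtype.val h
        exact Subtype.ext (φ.injective this)
      obtain ⟨b, hb⟩ := (Finite.injective_iff_surjective.mp hinj) ⟨a, ha⟩
      have hb' : φ (b : G) = a := congrArg Subtype.val hb
      have : φ⁻¹ a = (b : G) := by rw [← hb']; exact φ.left_inv _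
      rw [this]; exact b.2
    have hNk : ∀ k : ℤ, ∀ a ∈ N, (φ ^ k) a ∈ N := by
      intro k
      induction k using Int.induction_on with
      | zero => simpa using fun a ha => ha
      | succ k ih =>
        intro a ha
        have : (φ ^ ((k : ℤ) + 1)) a = (φ ^ (k : ℤ)) (φ a) := by
          rw [zpow_add_one]; rfl
        rw [this]; exact ih _ (hN a ha)
      | pred k ih =>
        intro a ha
        have : (φ ^ (-(k : ℤ) - 1)) a = (φ ^ (-(k : ℤ))) (φ⁻¹ a) := by
          rw [zpow_sub_one]; rfl
        rw [this]; exact ih _ (hNinv a ha)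
    have hginv : g⁻¹ * φ⁻¹ g ∈ N := by
      have h2 : φ⁻¹ (g⁻¹ * φ g) ∈ N := hNinv _ hg
      have h3 : φ⁻¹ (g⁻¹ * φ g) = (φ⁻¹ g)⁻¹ * g := by
        rw [map_mul, map_inv]
        congr 1
        exact φ.left_inv g
      rw [h3] at h2
      have := N.inv_mem h2
      simpa using this
    have hgk : ∀ k : ℤ, g⁻¹ * (φ ^ k) g ∈ N := by
      intro k
      induction k using Int.induction_on with
      | zero => simpa using N.one_mem
      | succ k ih =>
        have heq : (φ ^ ((k : ℤ) + 1)) g = (φ ^ (k : ℤ)) g * (φ ^ (k : ℤ)) (g⁻¹ * φ g) := by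
          rw [← map_mul, mul_inv_cancel_left, zpow_add_one]; rfl
        rw [heq, ← mul_assoc]
        exact N.mul_mem ih (hNk _ _ hg)
      | pred k ih =>
        have heq : (φ ^ (-(k : ℤ) - 1)) g
            = (φ ^ (-(k : ℤ))) g * (φ ^ (-(k : ℤ))) (g⁻¹ * φ⁻¹ g) := by
          rw [← map_mul, mul_inv_cancel_left, zpow_sub_one]; rfl
        rw [heq, ← mul_assoc]
        exact N.mul_mem ih (hNk _ _ hginv)
    have hσN : ∀ σ ∈ zpowers ψ, ∀ a ∈ N, σ a ∈ N := by
      rintro σ ⟨k, rfl⟩ a ha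
      have : ψ ^ k = φ ^ ((m / p : ℕ) * k : ℤ) := by
        rw [hψ, ← zpow_natCast, ← zpow_mul]
      show (ψ ^ k) a ∈ N
      rw [this]; exact hNk _ a ha
    have hσg : ∀ σ ∈ zpowers ψ, g⁻¹ * σ g ∈ N := by
      rintro σ ⟨k, rfl⟩
      have : ψ ^ k = φ ^ ((m / p : ℕ) * k : ℤ) := by
        rw [hψ, ← zpow_natCast, ← zpow_mul]
      show g⁻¹ * (ψ ^ k) g ∈ N
      rw [this]; exact hgk _
    -- the coset g N as a sub-action of ⟨ψ⟩
    set Γ : Subgroup (MulAut G) := zpowers ψ with hΓ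
    have hΓp : IsPGroup p Γ := IsPGroup.of_card (by rw [Nat.card_zpowers, hψord, pow_one])
    let S : SubMulAction Γ G :=
      { carrier := {x : G | g⁻¹ * x ∈ N}
        smul_mem' := by
          rintro ⟨σ, hσ⟩ x hx
          show g⁻¹ * σ x ∈ N
          have hx' : g⁻¹ * x ∈ N := hx
          have : σ x = σ g * σ (g⁻¹ * x) := by rw [← map_mul, mul_inv_cancel_left]
          rw [this, ← mul_assoc]
          exact N.mul_mem (hσg σ hσ) (hσN σ hσ _ hx') }
    have hcardS : Nat.card S = Nat.card N := by
      apply Nat.card_congr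
      exact ⟨fun x => ⟨g⁻¹ * x.1, x.2⟩,
        fun a => ⟨g * a.1, show g⁻¹ * (g * a.1) ∈ N by simpa using a.2⟩,
        fun x => by ext; simp, fun a => by ext; simp⟩
    have hpN : ¬ p ∣ Nat.card S := by
      rw [hcardS]
      intro hdvd
      have hc : Nat.Coprime p (Nat.card G) := Nat.Coprime.coprime_dvd_left hpm hcop
      have : p ∣ Nat.card G := hdvd.trans N.card_subgroup_dvd_card
      exact hp.one_lt.ne' (hc.eq_one_of_dvd this)
    have : Fact p.Prime := ⟨hp⟩
    obtain ⟨u, hu⟩ := hΓp.nonempty_fixed_point_of_prime_not_dvd_card S hpN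
    have huψ : ψ (u : G) = (u : G) := by
      have := hu ⟨ψ, mem_zpowers ψ⟩
      exact congrArg Subtype.val this
    have huN : g⁻¹ * (u : G) ∈ N := u.2
    set u₀ : G := (u : G) with hu₀
    -- the subgroup of ψ-fixed points
    let G' : Subgroup G :=
      { carrier := {x : G | ψ x = x}
        one_mem' := map_one ψ
        mul_mem' := by intro a b ha hb; show ψ (a * b) = a * b; rw [map_mul]; exact congrArg₂ (· * ·) ha hb
        inv_mem' := by intro a ha; show ψ a⁻¹ = a⁻¹; rw [map_inv]; exact congrArg (·⁻¹) ha }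
    have hcomm : ∀ x : G, ψ (φ x) = φ (ψ x) := by
      intro x
      have h := (Commute.refl φ).pow_right (m / p)
      have := congrArg (fun σ : MulAut G => σ x) h.eq
      simpa [MulAut.mul_apply] using this.symm
    have hcomminv : ∀ x : G, ψ (φ⁻¹ x) = φ⁻¹ (ψ x) := by
      intro x
      apply φ.injective
      rw [← hcomm, MulAut.apply_inv_self, MulAut.apply_inv_self]
    let φ' : MulAut G' :=
      { toFun := fun x => ⟨φ (x : G), show ψ (φ (x : G)) = φ x by rw [hcomm, x.2]⟩
        invFun := fun x => ⟨φ⁻¹ (x : G), show ψ (φ⁻¹ (x : G)) = φ⁻¹ x by rw [hcomminv, x.2]⟩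
        left_inv := fun x => Subtype.ext (φ.left_inv (x : G))
        right_inv := fun x => Subtype.ext (φ.right_inv (x : G))
        map_mul' := fun x y => Subtype.ext (map_mul φ (x : G) (y : G)) }
    have hφ'pow : ∀ (k : ℕ) (x : G'), ((φ' ^ k) x : G) = (φ ^ k) (x : G) := by
      intro k
      induction k with
      | zero => intro x; rfl
      | succ k ih =>
        intro x
        rw [pow_succ, pow_succ]
        have : (φ' ^ k * φ') x = (φ' ^ k) (φ' x) := rfl
        rw [this, ih]
        rfl
    have hφ'ord : orderOf φ' ∣ m / p := by
      apply orderOf_dvd_of_pow_eq_one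
      ext x
      have := hφ'pow (m / p) x
      show ((φ' ^ (m / p)) x : G) = ((1 : MulAut G') x : G)
      rw [this]
      exact x.2
    have hmp0 : m / p ≠ 0 := by
      have := Nat.div_pos (Nat.le_of_dvd (Nat.pos_of_ne_zero hm0) hpm) hp.pos
      omega
    have hlt : orderOf φ' < n := by
      calc orderOf φ' ≤ m / p := Nat.le_of_dvd (Nat.pos_of_ne_zero hmp0) hφ'ord
        _ < m := Nat.div_lt_self (Nat.pos_of_ne_zero hm0) hp.one_lt
        _ = n := hord
    have hcop' : Nat.Coprime (orderOf φ') (Nat.card G') := by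
      have h1 : orderOf φ' ∣ m := hφ'ord.trans (Nat.div_dvd_of_dvd hpm)
      exact Nat.Coprime.coprime_dvd_left h1
        (Nat.Coprime.coprime_dvd_right G'.card_subgroup_dvd_card hcop)
    set N' : Subgroup G' := N.subgroupOf G' with hN'def
    have hN' : ∀ a ∈ N', φ' a ∈ N' := by
      intro a ha
      rw [mem_subgroupOf] at ha ⊢
      exact hN _ ha
    set g' : G' := ⟨u₀, huψ⟩ with hg'def
    have hg' : g'⁻¹ * φ' g' ∈ N' := by
      rw [mem_subgroupOf]
      show u₀⁻¹ * φ u₀ ∈ N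
      have hb : g⁻¹ * u₀ ∈ N := huN
      have heq : u₀⁻¹ * φ u₀
          = (g⁻¹ * u₀)⁻¹ * ((g⁻¹ * φ g) * φ (g⁻¹ * u₀)) := by
        rw [map_mul, map_inv]
        group
      rw [heq]
      exact N.mul_mem (N.inv_mem hb) (N.mul_mem hg (hN _ hb))
    obtain ⟨h', hh'fix, hh'mem⟩ :=
      IH (orderOf φ') hlt G' φ' rfl hcop' N' hN' g' hg'
    refine ⟨(h' : G), congrArg Subtype.val hh'fix, ?_⟩
    rw [mem_subgroupOf] at hh'mem
    have hh'mem' : u₀⁻¹ * (h' : G) ∈ N := hh'mem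
    have heq : g⁻¹ * (h' : G) = (g⁻¹ * u₀) * (u₀⁻¹ * (h' : G)) := by group
    rw [heq]
    exact N.mul_mem huN hh'mem'

/-- Let `φ` be an automorphism of a finite group `G` of order coprime to `|G|`, and `N` a
normal `φ`-invariant subgroup.  Then every fixed point of the induced automorphism of
`G ⧸ N` is the image of a fixed point of `φ` in `G`. -/
theorem coprime_aut_fixed_points_of_quotient
    {G : Type*} [Group G] [Finite G]
    (φ : MulAut G) (hcop : Nat.Coprime (orderOf φ) (Nat.card G))
    (N : Subgroup G) [N.Normal] (hinv : ∀ n ∈ N, φ n ∈ N)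
    (x : G ⧸ N)
    (hx : QuotientGroup.map N N φ.toMonoidHom (fun n hn => hinv n hn) x = x) :
    ∃ g : G, φ g = g ∧ (g : G ⧸ N) = x := by
  obtain ⟨g, rfl⟩ := QuotientGroup.mk_surjective x
  replace hx : ((φ g : G) : G ⧸ N) = (g : G ⧸ N) := hx
  rw [QuotientGroup.eq] at hx
  have hg : g⁻¹ * φ g ∈ N := by
    have := N.inv_mem hx
    simpa using this
  obtain ⟨h, hfix, hmem⟩ :=
    aux_coset_fixed (orderOf φ) G φ rfl hcop N hinv g hg
  exact ⟨h, hfix, (QuotientGroup.eq).mpr (by simpa using N.inv_mem hmem)⟩
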